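/- Let F = {f₁,…,fₘ} be an IFS of continuous self-maps of a metric space X. Then the recurrent set R_F is forward-invariant: if x ∈ R_F then fᵢ(x) ∈ R_F for every i. -/

import Mathlib

open Filter Metric Topology

/-- Composition of the IFS maps along a word. -/
def ifsComp {X : Type*} {m : ℕ} (f : Fin m → X → X) : List (Fin m) → X → X
  | [], x => x
  | i :: I, x => f i (ifsComp f I x)

/-- The limit set of a set under the IFS. -/
def limitSet {X : Type*} [MetricSpace X] {m : ℕ} (f : Fin m → X → X) (A : Set X) : Set X :=
  {y | ∃ (I : ℕ → List (Fin m)) (a : ℕ → X), (∀ n, a n ∈ A) ∧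
    Tendsto (fun n => (I n).length) atTop atTop ∧
    Tendsto (fun n => ifsComp f (I n) (a n)) atTop (nhds y)}

/-- The orbit of a point under the IFS. -/
def ifsOrbit {X : Type*} {m : ℕ} (f : Fin m → X → X) (x : X) : Set X :=
  {y | ∃ I : List (Fin m), ifsComp f I x = y}

/-- A point is recurrent if it belongs to the limit set of every point of its orbit. -/
def isRecurrent {X : Type*} [MetricSpace X] {m : ℕ} (f : Fin m → X → X) (x : X) : Prop :=
  ∀ z ∈ ifsOrbit f x, x ∈ limitSet f {z}

lemma ifsComp_append {X : Type*} {m : ℕ} (f : Fin m → X → X) (I J : List (Fin m)) (x : X) :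
    ifsComp f (I ++ J) x = ifsComp f I (ifsComp f J x) := by
  induction I with
  | nil => rfl
  | cons i I ih => simp [ifsComp, ih]

theorem stmt_2 {X : Type*} [MetricSpace X] {m : ℕ} (f : Fin m → X → X)
    (hf : ∀ i, Continuous (f i)) (x : X) (hx : isRecurrent f x) :
    ∀ i : Fin m, isRecurrent f (f i x) := by
  intro i z hz
  obtain ⟨I, hI⟩ := hz
  have hz' : z ∈ ifsOrbit f x := ⟨I ++ [i], by simpa [ifsComp_append, ifsComp] using hI⟩
  obtain ⟨J, a, ha, hlen, hconv⟩ := hx z hz'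
  refine ⟨fun n => i :: J n, a, ha, ?_, ?_⟩
  · exact tendsto_atTop_mono (fun n => by simp) hlen
  · have := ((hf i).continuousAt.tendsto).comp hconv
    simpa [ifsComp, Function.comp_def] using this
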